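/- Fix reals α, β with α > −1, β > −1 and α − β > −1, and integers n, k, m, j with 0 ≤ k ≤ n and 0 ≤ j ≤ m. Then ∫_0^∞∫_0^∞ P^{(α,β)}_{n,k}(x,y) · P^{(α,β)}_{m,j}(x,y) · x^{α−β} y^{β} e^{−(x+y/x)} dy dx equals t_{n,k}^{(α,β)} if n = m and k = j, and equals 0 otherwise, where t_{n,k}^{(α,β)} = Γ(β+k+1) Γ(α+n+k+2) / [k! (n−k)!]. -/

import Mathlib

open Finset MeasureTheory Real

/-- Pochhammer symbol `(a)_m = a (a+1) ⋯ (a+m-1)`. -/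
noncomputable def poch (a : ℝ) (m : ℕ) : ℝ := ∏ i ∈ Finset.range m, (a + i)

/-- Jacobi polynomial `P_n^{(α,β)}(x)`. -/
noncomputable def jacobiP (α β : ℝ) (n : ℕ) (x : ℝ) : ℝ :=
  ∑ i ∈ Finset.range (n + 1),
    poch (α + i + 1) (n - i) * poch (n + α + β + 1) i /
      ((Nat.factorial (n - i) : ℝ) * (Nat.factorial i : ℝ)) * ((x - 1) / 2) ^ i

/-- Generalized Laguerre polynomial `L_n^{(α)}(x)`. -/
noncomputable def laguerreL (α : ℝ) (n : ℕ) (x : ℝ) : ℝ :=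
  ∑ i ∈ Finset.range (n + 1),
    poch (α + i + 1) (n - i) / ((Nat.factorial (n - i) : ℝ) * (Nat.factorial i : ℝ)) * (-x) ^ i

/-- Laguerre–Laguerre Koornwinder polynomial
`P^{(α,β)}_{n,k}(x,y) = L^{(α+2k+1)}_{n-k}(x) · x^k · L^{(β)}_k(y/x)`. -/
noncomputable def llP (α β : ℝ) (n k : ℕ) (x y : ℝ) : ℝ :=
  laguerreL (α + 2 * k + 1) (n - k) x * x ^ k * laguerreL β k (y / x)

/-- Squared norm constant `t_{n,k}^{(α,β)}` of the Laguerre–Laguerre Koornwinder polynomials. -/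
noncomputable def tconst (α β : ℝ) (n k : ℕ) : ℝ :=
  Real.Gamma (β + k + 1) * Real.Gamma (α + n + k + 2) /
    ((Nat.factorial k : ℝ) * (Nat.factorial (n - k) : ℝ))

lemma poch_zero (a : ℝ) : poch a 0 = 1 := by simp [poch]

lemma poch_succ (a : ℝ) (m : ℕ) : poch a (m+1) = poch a m * (a + m) := by
  simp [poch, Finset.prod_range_succ]

lemma poch_succ' (a : ℝ) (m : ℕ) : poch a (m+1) = a * poch (a+1) m := by
  rw [poch, Finset.prod_range_succ']
  simp only [Nat.cast_zero, add_zero, poch]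
  rw [mul_comm]
  congr 1
  refine Finset.prod_congr rfl fun i _ => ?_
  push_cast; ring

lemma poch_add (a : ℝ) (m r : ℕ) : poch a (m + r) = poch a m * poch (a + m) r := by
  rw [poch, Finset.prod_range_add]
  congr 1
  refine Finset.prod_congr rfl fun i _ => ?_
  push_cast; ring

lemma poch_sub_poch (a : ℝ) (r : ℕ) :
    poch a r - poch (a+1) r = -(r:ℝ) * poch (a+1) (r-1) := by
  cases r with
  | zero => simp [poch_zero]
  | succ r =>
    rw [poch_succ' a r, poch_succ (a+1) r]
    push_cast
    ring

lemma poch_pos {a : ℝ} (ha : 0 < a) (m : ℕ) : 0 < poch a m := by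
  refine Finset.prod_pos fun i _ => ?_
  positivity

lemma alt_step (g : ℕ → ℝ) (p : ℕ) :
    ∑ i ∈ range (p+2), (-1:ℝ)^i * ((p+1).choose i : ℝ) * g i
    = ∑ i ∈ range (p+1), (-1:ℝ)^i * (p.choose i : ℝ) * g i
      - ∑ i ∈ range (p+1), (-1:ℝ)^i * (p.choose i : ℝ) * g (i+1) := by
  rw [Finset.sum_range_succ' (fun i => (-1:ℝ)^i * ((p+1).choose i : ℝ) * g i) (p+1)]
  rw [Finset.sum_range_succ' (fun i => (-1:ℝ)^i * (p.choose i : ℝ) * g i) p]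
  have hch : ∀ j, (((p+1).choose (j+1) : ℕ) : ℝ) = (p.choose j : ℝ) + (p.choose (j+1) : ℝ) := by
    intro j; rw [Nat.choose_succ_succ]; push_cast; ring
  have hsplit : ∑ j ∈ range (p+1), (-1:ℝ)^(j+1) * ((p+1).choose (j+1) : ℝ) * g (j+1)
      = ∑ j ∈ range (p+1), (-1:ℝ)^(j+1) * (p.choose j : ℝ) * g (j+1)
        + ∑ j ∈ range (p+1), (-1:ℝ)^(j+1) * (p.choose (j+1) : ℝ) * g (j+1) := by
    rw [← Finset.sum_add_distrib]
    refine Finset.sum_congr rfl fun j _ => ?_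
    rw [hch]; ring
  simp only [hsplit]
  have h2 : ∑ j ∈ range (p+1), (-1:ℝ)^(j+1) * (p.choose (j+1) : ℝ) * g (j+1)
      = ∑ j ∈ range p, (-1:ℝ)^(j+1) * (p.choose (j+1) : ℝ) * g (j+1) := by
    rw [Finset.sum_range_succ]
    simp [Nat.choose_succ_self]
  have h3 : ∑ j ∈ range (p+1), (-1:ℝ)^(j+1) * (p.choose j : ℝ) * g (j+1)
      = - ∑ j ∈ range (p+1), (-1:ℝ)^j * (p.choose j : ℝ) * g (j+1) := by
    rw [← Finset.sum_neg_distrib]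
    refine Finset.sum_congr rfl fun j _ => ?_
    ring
  rw [h2, h3]
  simp only [pow_zero, Nat.choose_zero_right, Nat.cast_one]
  ring

lemma alt_sum_poch (l : ℕ) : ∀ (p : ℕ) (x : ℝ),
    ∑ i ∈ range (p+1), (-1:ℝ)^i * (p.choose i : ℝ) * poch (x + i) l
    = (-1:ℝ)^p * (l.descFactorial p : ℝ) * poch (x + p) (l - p) := by
  intro p
  induction p with
  | zero => intro x; simp [poch]
  | succ p ih =>
    intro x
    have := alt_step (fun i => poch (x + i) l) p
    rw [this]
    have h1 : ∀ i : ℕ, poch (x + ((i+1 : ℕ) : ℝ)) l = poch ((x+1) + (i:ℝ)) l := by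
      intro i; congr 1; push_cast; ring
    simp only [h1]
    rw [ih x, ih (x+1)]
    have hx : (x + 1 + p : ℝ) = (x + p) + 1 := by ring
    rw [hx]
    have key := poch_sub_poch (x + p) (l - p)
    -- goal:  (-1)^p * df * poch (x+p) (l-p) - (-1)^p * df * poch ((x+p)+1) (l-p)
    --      = (-1)^(p+1) * df' * poch (x + (p+1)) (l - (p+1))
    have hdf : (l.descFactorial (p+1) : ℝ) = ((l - p : ℕ) : ℝ) * (l.descFactorial p : ℝ) := by
      rw [Nat.descFactorial_succ]; push_cast; ring
    have hxp : (x + ((p:ℕ)+1:ℕ) : ℝ) = (x + p) + 1 := by push_cast; ring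
    have hl : l - (p+1) = (l - p) - 1 := by omega
    calc (-1:ℝ)^p * (l.descFactorial p : ℝ) * poch (x + p) (l - p)
          - (-1:ℝ)^p * (l.descFactorial p : ℝ) * poch ((x+p)+1) (l - p)
        = (-1:ℝ)^p * (l.descFactorial p : ℝ) *
            (poch (x + p) (l-p) - poch ((x+p)+1) (l-p)) := by ring
      _ = (-1:ℝ)^p * (l.descFactorial p : ℝ) * (-(((l-p : ℕ)):ℝ) * poch ((x+p)+1) ((l-p)-1)) := by
            rw [key]
      _ = (-1:ℝ)^(p+1) * (l.descFactorial (p+1) : ℝ) * poch (x + (p+1:ℕ)) (l - (p+1)) := by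
            rw [hdf, hl, hxp]; ring

lemma sum_id (γ : ℝ) (p q : ℕ) :
    ∑ i ∈ range (p+1), ∑ l ∈ range (q+1),
      poch (γ + i + 1) (p - i) / ((Nat.factorial (p-i) : ℝ) * (Nat.factorial i : ℝ)) *
        (poch (γ + l + 1) (q - l) / ((Nat.factorial (q-l) : ℝ) * (Nat.factorial l : ℝ))) *
        ((-1:ℝ)^(i+l) * poch (γ+1) (i+l))
    = if p = q then poch (γ+1) p / (Nat.factorial p : ℝ) else 0 := by
  have hfac : ∀ r : ℕ, ((Nat.factorial r : ℝ)) ≠ 0 := fun r => by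
    exact_mod_cast (Nat.factorial_pos r).ne'
  set C : ℕ → ℝ := fun l => poch (γ + l + 1) (q - l) /
      ((Nat.factorial (q-l) : ℝ) * (Nat.factorial l : ℝ)) with hC
  set D : ℝ := poch (γ+1) p / (Nat.factorial p : ℝ) with hD
  -- Step 1: pointwise rewriting of the summand
  have hterm : ∀ i ∈ range (p+1), ∀ l ∈ range (q+1),
      poch (γ + i + 1) (p - i) / ((Nat.factorial (p-i) : ℝ) * (Nat.factorial i : ℝ)) *
        (poch (γ + l + 1) (q - l) / ((Nat.factorial (q-l) : ℝ) * (Nat.factorial l : ℝ))) *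
        ((-1:ℝ)^(i+l) * poch (γ+1) (i+l))
      = (D * ((-1:ℝ)^l * C l)) * ((-1:ℝ)^i * (p.choose i : ℝ) * poch ((γ+1) + i) l) := by
    intro i hi l _
    have hip : i ≤ p := by simpa using Nat.lt_succ_iff.mp (Finset.mem_range.mp hi)
    have harg : γ + (i:ℝ) + 1 = (γ+1) + (i:ℝ) := by ring
    have hkey : poch (γ + i + 1) (p - i) * poch (γ+1) (i+l)
        = poch (γ+1) p * poch ((γ+1) + (i:ℝ)) l := by
      rw [harg, poch_add (γ+1) i l]
      have h2 : poch (γ+1) i * poch ((γ+1) + (i:ℝ)) (p-i) = poch (γ+1) p := by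
        rw [← poch_add (γ+1) i (p-i)]; congr 1; omega
      linear_combination poch ((γ+1) + (i:ℝ)) l * h2
    have hch : (p.choose i : ℝ) * ((Nat.factorial i : ℝ) * (Nat.factorial (p-i) : ℝ))
        = (Nat.factorial p : ℝ) := by
      exact_mod_cast congrArg (Nat.cast : ℕ → ℝ)
        (by rw [← Nat.choose_mul_factorial_mul_factorial hip]; ring)
    rw [hC, hD, pow_add]
    field_simp
    linear_combination
      ((Nat.factorial p : ℝ) * poch (γ + l + 1) (q - l)) * hkey
      - (poch (γ+1) p * poch ((γ+1) + (i:ℝ)) l * poch (γ + l + 1) (q - l)) * hch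
  rw [Finset.sum_congr rfl (fun i hi => Finset.sum_congr rfl (fun l hl => hterm i hi l hl))]
  rw [Finset.sum_comm]
  have hpull : ∀ l : ℕ,
      ∑ i ∈ range (p+1), (D * ((-1:ℝ)^l * C l)) * ((-1:ℝ)^i * (p.choose i : ℝ) * poch ((γ+1) + i) l)
      = (D * ((-1:ℝ)^l * C l)) * ((-1:ℝ)^p * (l.descFactorial p : ℝ) * poch ((γ+1) + p) (l - p)) := by
    intro l
    rw [← Finset.mul_sum, alt_sum_poch l p (γ+1)]
  rw [Finset.sum_congr rfl fun l _ => hpull l]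
  by_cases hpq : q < p
  · have hz : ∀ l ∈ range (q+1),
        (D * ((-1:ℝ)^l * C l)) * ((-1:ℝ)^p * (l.descFactorial p : ℝ) * poch ((γ+1) + p) (l - p)) = 0 := by
      intro l hl
      have : l.descFactorial p = 0 :=
        Nat.descFactorial_of_lt (by have := Finset.mem_range.mp hl; omega)
      rw [this]; push_cast; ring
    rw [Finset.sum_congr rfl hz, Finset.sum_const, smul_zero, if_neg (by omega)]
  · push_neg at hpq
    set M := q - p with hM
    have hq1 : q + 1 = p + (M + 1) := by omega
    rw [hq1, Finset.sum_range_add]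
    have hz : ∀ l ∈ range p,
        (D * ((-1:ℝ)^l * C l)) * ((-1:ℝ)^p * (l.descFactorial p : ℝ) * poch ((γ+1) + p) (l - p)) = 0 := by
      intro l hl
      have : l.descFactorial p = 0 :=
        Nat.descFactorial_of_lt (Finset.mem_range.mp hl)
      rw [this]; push_cast; ring
    rw [Finset.sum_congr rfl hz, Finset.sum_const, smul_zero, zero_add]
    have h4 : ((-1:ℝ)^p)^2 = 1 := by
      rw [← pow_mul, mul_comm, pow_mul]; norm_num
    have hterm2 : ∀ r ∈ range (M+1),
        (D * ((-1:ℝ)^(p+r) * C (p+r))) *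
          ((-1:ℝ)^p * ((p+r).descFactorial p : ℝ) * poch ((γ+1) + p) ((p+r) - p))
        = (D * poch (γ + p + 1) M / (Nat.factorial M : ℝ)) * ((-1:ℝ)^r * (M.choose r : ℝ)) := by
      intro r hr
      have hrM : r ≤ M := by have := Finset.mem_range.mp hr; omega
      have e1 : (p+r) - p = r := by omega
      have e2 : q - (p+r) = M - r := by omega
      have hpoch : poch ((γ+1) + (p:ℝ)) r * poch (γ + ((p+r:ℕ):ℝ) + 1) (M - r)
          = poch (γ + (p:ℝ) + 1) M := by
        have : γ + ((p+r:ℕ):ℝ) + 1 = ((γ+1) + (p:ℝ)) + (r:ℝ) := by push_cast; ring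
        rw [this, ← poch_add ((γ+1) + (p:ℝ)) r (M-r)]
        have : r + (M - r) = M := by omega
        rw [this]; congr 1; ring
      push_cast at hpoch
      have hfac2 : (((p+r).descFactorial p : ℕ) : ℝ) * (Nat.factorial r : ℝ)
          = ((p.factorial : ℕ) : ℝ) * ((p+r).choose p : ℝ) * (Nat.factorial r : ℝ) := by
        rw [Nat.descFactorial_eq_factorial_mul_choose]; push_cast; ring
      have hfac3 : ((p+r).choose p : ℝ) * ((Nat.factorial p : ℝ) * (Nat.factorial r : ℝ))
          = (Nat.factorial (p+r) : ℝ) := by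
        exact_mod_cast congrArg (Nat.cast : ℕ → ℝ)
          (by rw [← Nat.choose_mul_factorial_mul_factorial (Nat.le_add_right p r),
                Nat.add_sub_cancel_left]; ring)
      have hfac4 : ((M.choose r : ℕ) : ℝ) * ((Nat.factorial r : ℝ) * (Nat.factorial (M-r) : ℝ))
          = (Nat.factorial M : ℝ) := by
        exact_mod_cast congrArg (Nat.cast : ℕ → ℝ)
          (by rw [← Nat.choose_mul_factorial_mul_factorial hrM]; ring)
      simp only [hC, hD, e1, e2, Nat.descFactorial_eq_factorial_mul_choose, pow_add]
      push_cast
      field_simp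
      linear_combination
        (poch (γ+1) p * (Nat.factorial p : ℝ) * ((p+r).choose p : ℝ) *
          (Nat.factorial M : ℝ) * poch (γ + ((p:ℝ) + r) + 1) (M - r) *
          poch (γ + 1 + (p:ℝ)) r) * h4
        + (poch (γ+1) p * (Nat.factorial p : ℝ) * ((p+r).choose p : ℝ) *
          (Nat.factorial M : ℝ)) * hpoch
        + (poch (γ+1) p * (Nat.factorial (M-r) : ℝ) * poch (γ + (p:ℝ) + 1) M *
          (M.choose r : ℝ)) * hfac3
        - (poch (γ+1) p * (Nat.factorial p : ℝ) * poch (γ + (p:ℝ) + 1) M *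
          ((p+r).choose p : ℝ)) * hfac4
    rw [Finset.sum_congr rfl hterm2, ← Finset.mul_sum]
    have halt : ∑ r ∈ range (M+1), (-1:ℝ)^r * (M.choose r : ℝ)
        = if M = 0 then 1 else 0 := by
      have := Int.alternating_sum_range_choose (n := M)
      exact_mod_cast congrArg (Int.cast : ℤ → ℝ) this
    rw [halt]
    by_cases hM0 : M = 0
    · have hpq2 : p = q := by omega
      rw [if_pos hM0, if_pos hpq2, hM0, poch_zero]
      simp [hD]
    · rw [if_neg hM0, if_neg (by omega)]
      ring

lemma Gamma_poch (s : ℝ) (hs : 0 < s) (N : ℕ) :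
    Real.Gamma (s + N) = poch s N * Real.Gamma s := by
  induction N with
  | zero => simp [poch]
  | succ N ih =>
    have h1 : s + ((N:ℝ)+1) = (s + N) + 1 := by ring
    have h2 : s + (N:ℝ) ≠ 0 := by positivity
    rw [show ((N+1 : ℕ):ℝ) = (N:ℝ)+1 by push_cast; ring, h1,
      Real.Gamma_add_one h2, ih, poch_succ]
    ring

lemma laguerre_orth (γ : ℝ) (hγ : -1 < γ) (p q : ℕ) :
    ∫ x in Set.Ioi (0:ℝ), laguerreL γ p x * laguerreL γ q x * (x ^ γ * Real.exp (-x))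
    = if p = q then Real.Gamma (γ + p + 1) / (Nat.factorial p : ℝ) else 0 := by
  set a : ℕ → ℝ := fun i =>
    poch (γ+i+1) (p-i) / ((Nat.factorial (p-i) : ℝ) * (Nat.factorial i : ℝ)) with ha
  set b : ℕ → ℝ := fun l =>
    poch (γ+l+1) (q-l) / ((Nat.factorial (q-l):ℝ) * (Nat.factorial l : ℝ)) with hb
  set c : ℕ × ℕ → ℝ := fun z => a z.1 * b z.2 * (-1:ℝ)^(z.1+z.2) with hc
  have hpos : ∀ N : ℕ, (0:ℝ) < γ + N + 1 := by
    intro N; have : (0:ℝ) ≤ (N:ℝ) := Nat.cast_nonneg N; linarith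
  -- step 1 : pointwise expansion on Ioi 0
  have hstep1 : ∫ x in Set.Ioi (0:ℝ), laguerreL γ p x * laguerreL γ q x * (x ^ γ * Real.exp (-x))
      = ∫ x in Set.Ioi (0:ℝ), ∑ z ∈ range (p+1) ×ˢ range (q+1),
          c z * (Real.exp (-x) * x ^ (γ + ((z.1+z.2 : ℕ):ℝ))) := by
    refine setIntegral_congr_fun measurableSet_Ioi (fun x hx => ?_)
    have hx0 : (0:ℝ) < x := hx
    rw [Finset.sum_product, laguerreL, laguerreL, Finset.sum_mul_sum]
    rw [Finset.sum_mul]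
    refine Finset.sum_congr rfl fun i _ => ?_
    rw [Finset.sum_mul]
    refine Finset.sum_congr rfl fun l _ => ?_
    have h2 : x ^ (γ + ((i+l:ℕ):ℝ)) = x ^ γ * x ^ (i+l : ℕ) := by
      rw [← Real.rpow_natCast x (i+l), ← Real.rpow_add hx0]
    have h3 : (-x)^i * (-x)^l = (-1:ℝ)^(i+l) * x^(i+l) := by
      rw [neg_pow, neg_pow, pow_add, pow_add]; ring
    simp only [hc, ha, hb, h2]
    calc a i * (-x)^i * (b l * (-x)^l) * (x ^ γ * Real.exp (-x))
        = a i * b l * ((-x)^i * (-x)^l) * (x ^ γ * Real.exp (-x)) := by ring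
      _ = a i * b l * ((-1:ℝ)^(i+l) * x^(i+l)) * (x ^ γ * Real.exp (-x)) := by rw [h3]
      _ = a i * b l * (-1:ℝ)^(i+l) * (Real.exp (-x) * (x ^ γ * x ^ (i+l))) := by ring
  rw [hstep1]
  -- step 2 : integrate term by term
  have hint : ∀ z : ℕ × ℕ, IntegrableOn
      (fun x : ℝ => c z * (Real.exp (-x) * x ^ (γ + ((z.1+z.2 : ℕ):ℝ)))) (Set.Ioi 0) := by
    intro z
    have h := Real.GammaIntegral_convergent (hpos (z.1+z.2))
    have he : γ + ((z.1+z.2 : ℕ):ℝ) = γ + ((z.1+z.2 : ℕ):ℝ) + 1 - 1 := by ring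
    rw [he]
    exact h.const_mul _
  rw [integral_finset_sum _ (fun z _ => hint z)]
  have hval : ∀ z : ℕ × ℕ,
      ∫ x in Set.Ioi (0:ℝ), c z * (Real.exp (-x) * x ^ (γ + ((z.1+z.2 : ℕ):ℝ)))
      = c z * Real.Gamma (γ + (z.1+z.2 : ℕ) + 1) := by
    intro z
    have hg : ∫ x in Set.Ioi (0:ℝ), Real.exp (-x) * x ^ (γ + ((z.1+z.2 : ℕ):ℝ))
        = Real.Gamma (γ + (z.1+z.2 : ℕ) + 1) := by
      rw [Real.Gamma_eq_integral (hpos (z.1+z.2))]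
      simp only [add_sub_cancel_right]
    rw [integral_const_mul, hg]
  rw [Finset.sum_congr rfl (fun z _ => hval z)]
  -- step 3 : algebra
  have hGam : ∀ N : ℕ, Real.Gamma (γ + (N:ℝ) + 1) = poch (γ+1) N * Real.Gamma (γ+1) := by
    intro N
    have : γ + (N:ℝ) + 1 = (γ+1) + (N:ℝ) := by ring
    rw [this, Gamma_poch (γ+1) (by linarith) N]
  have : ∑ z ∈ range (p+1) ×ˢ range (q+1), c z * Real.Gamma (γ + (z.1+z.2 : ℕ) + 1)
      = (∑ i ∈ range (p+1), ∑ l ∈ range (q+1),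
          a i * (b l) * ((-1:ℝ)^(i+l) * poch (γ+1) (i+l))) * Real.Gamma (γ+1) := by
    rw [Finset.sum_product, Finset.sum_mul]
    refine Finset.sum_congr rfl fun i _ => ?_
    rw [Finset.sum_mul]
    refine Finset.sum_congr rfl fun l _ => ?_
    rw [hGam (i+l), hc]
    ring
  rw [this, sum_id γ p q]
  by_cases hpq : p = q
  · rw [if_pos hpq, if_pos hpq, hGam p]
    ring
  · rw [if_neg hpq, if_neg hpq, zero_mul]

/-- Orthogonality of the Laguerre–Laguerre Koornwinder polynomials. -/
theorem ll_orthogonality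
    (α β : ℝ) (hα : α > -1) (hβ : β > -1) (hαβ : α - β > -1) (n k m j : ℕ)
    (hk : 0 ≤ k) (hkn : k ≤ n) (hj : 0 ≤ j) (hjm : j ≤ m) :
    ∫ x in Set.Ioi (0 : ℝ), ∫ y in Set.Ioi (0 : ℝ),
        llP α β n k x y * llP α β m j x y *
          (x ^ (α - β) * y ^ β * Real.exp (-(x + y / x)))
      = if n = m ∧ k = j then tconst α β n k else 0 := by
  have hinner : ∀ x ∈ Set.Ioi (0:ℝ),
      (∫ y in Set.Ioi (0:ℝ), llP α β n k x y * llP α β m j x y *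
          (x ^ (α - β) * y ^ β * Real.exp (-(x + y / x))))
      = (laguerreL (α + 2 * k + 1) (n - k) x * laguerreL (α + 2 * j + 1) (m - j) x *
          (x ^ k * x ^ j * x ^ (α - β) * (x * x ^ β)) * Real.exp (-x))
        * (if k = j then Real.Gamma (β + k + 1) / (Nat.factorial k : ℝ) else 0) := by
    intro x hx
    have hx0 : (0:ℝ) < x := hx
    set G : ℝ → ℝ := fun u =>
      laguerreL β k u * laguerreL β j u * (u ^ β * Real.exp (-u)) with hG
    set Cx : ℝ := laguerreL (α + 2 * k + 1) (n - k) x * laguerreL (α + 2 * j + 1) (m - j) x *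
        (x ^ k * x ^ j * x ^ (α - β) * x ^ β) * Real.exp (-x) with hCx
    have hpt : ∀ y ∈ Set.Ioi (0:ℝ),
        llP α β n k x y * llP α β m j x y *
          (x ^ (α - β) * y ^ β * Real.exp (-(x + y / x)))
        = Cx * G (x⁻¹ * y) := by
      intro y hy
      have hy0 : (0:ℝ) < y := hy
      have hinv : x⁻¹ * y = y / x := by field_simp
      have hyβ : (y / x) ^ β * x ^ β = y ^ β := by
        rw [← Real.mul_rpow (by positivity) (by positivity)]
        congr 1; field_simp
      have hexp : Real.exp (-(x + y / x)) = Real.exp (-x) * Real.exp (-(y / x)) := by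
        rw [← Real.exp_add]; ring_nf
      rw [hG, hCx, llP, llP, hinv, hexp]
      simp only []
      linear_combination (laguerreL (α + 2 * k + 1) (n - k) x *
        laguerreL (α + 2 * j + 1) (m - j) x * (x:ℝ) ^ k * x ^ j * x ^ (α - β) *
        Real.exp (-x) * Real.exp (-(y / x)) * laguerreL β k (y / x) *
        laguerreL β j (y / x)) * hyβ.symm
    rw [setIntegral_congr_fun measurableSet_Ioi hpt, integral_const_mul,
      integral_comp_mul_left_Ioi G 0 (inv_pos.mpr hx0)]
    simp only [mul_zero, inv_inv, smul_eq_mul]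
    have hGint : ∫ u in Set.Ioi (0:ℝ), G u
        = if k = j then Real.Gamma (β + k + 1) / (Nat.factorial k : ℝ) else 0 := by
      rw [hG]; exact laguerre_orth β hβ k j
    rw [hGint, hCx]
    ring
  rw [setIntegral_congr_fun measurableSet_Ioi hinner]
  by_cases hkj : k = j
  · subst hkj
    simp only [eq_self_iff_true, if_true, and_true]
    have hpt2 : ∀ x ∈ Set.Ioi (0:ℝ),
        (laguerreL (α + 2 * k + 1) (n - k) x * laguerreL (α + 2 * k + 1) (m - k) x *
          (x ^ k * x ^ k * x ^ (α - β) * (x * x ^ β)) * Real.exp (-x))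
          * (Real.Gamma (β + k + 1) / (Nat.factorial k : ℝ))
        = (Real.Gamma (β + k + 1) / (Nat.factorial k : ℝ)) *
          (laguerreL (α + 2 * k + 1) (n - k) x * laguerreL (α + 2 * k + 1) (m - k) x *
            (x ^ (α + 2 * (k:ℝ) + 1) * Real.exp (-x))) := by
      intro x hx
      have hx0 : (0:ℝ) < x := hx
      have hxx : x ^ (α + 2 * (k:ℝ) + 1)
          = x ^ ((k:ℝ)) * x ^ ((k:ℝ)) * x ^ (α - β) * (x ^ (1:ℝ) * x ^ β) := by
        rw [← Real.rpow_add hx0, ← Real.rpow_add hx0, ← Real.rpow_add hx0,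
          ← Real.rpow_add hx0]
        congr 1; ring
      rw [hxx, Real.rpow_natCast, Real.rpow_one]
      ring
    rw [setIntegral_congr_fun measurableSet_Ioi hpt2, integral_const_mul,
      laguerre_orth (α + 2 * k + 1) (by have : (0:ℝ) ≤ (k:ℝ) := Nat.cast_nonneg k; linarith)
        (n - k) (m - k)]
    by_cases hnm : n = m
    · subst hnm
      rw [if_pos rfl, if_pos rfl]
      have hcast : α + 2 * (k:ℝ) + 1 + ((n - k : ℕ):ℝ) + 1 = α + n + k + 2 := by
        rw [Nat.cast_sub hkn]; ring
      rw [hcast, tconst]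
      ring
    · rw [if_neg (by omega), if_neg hnm, mul_zero]
  · simp only [if_neg hkj, mul_zero, integral_zero, if_neg (by tauto : ¬(n = m ∧ k = j))]
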